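/- Let p be a prime, let λ₁, …, λ_k (k ≥ 2) be integers with λ₁ and λ₂ not divisible by p, let A ⊆ ℤ/pℤ be nonempty, and let K > 0. If |λ₁·A + λ₂·A + … + λ_k·A| ≤ K·|A|, then |A + A| ≤ K²·|A|. -/

import Mathlib

open Pointwise

theorem ruzsa_doubling_from_dilates (p : ℕ) (hp : p.Prime)
    (k : ℕ) (hk : 2 ≤ k) (l : Fin k → ℤ)
    (h₁ : ¬ (p : ℤ) ∣ l ⟨0, by omega⟩)
    (h₂ : ¬ (p : ℤ) ∣ l ⟨1, by omega⟩)
    (A : Finset (ZMod p)) (hA : A.Nonempty) (K : ℝ) (hK : 0 < K)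
    (hsum : ((∑ i, A.image fun a => l i • a).card : ℝ) ≤ K * A.card) :
    ((A + A).card : ℝ) ≤ K ^ 2 * A.card := by
  haveI : Fact p.Prime := ⟨hp⟩
  set i0 : Fin k := ⟨0, by omega⟩
  set i1 : Fin k := ⟨1, by omega⟩
  have hne : i0 ≠ i1 := by simp [i0, i1, Fin.ext_iff]
  set f : Fin k → Finset (ZMod p) := fun i => A.image fun a => l i • a with hf
  -- each f i is nonempty
  have hfne : ∀ i, (f i).Nonempty := fun i => hA.image _
  -- units
  have hu : ∀ i : Fin k, ¬ (p : ℤ) ∣ l i → ((l i : ZMod p) ≠ 0) := by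
    intro i hi h
    exact hi (by exact_mod_cast (ZMod.intCast_zmod_eq_zero_iff_dvd (l i) p).1 h)
  have hcard : ∀ i : Fin k, ¬ (p : ℤ) ∣ l i → (f i).card = A.card := by
    intro i hi
    apply Finset.card_image_of_injective
    intro a b hab
    have h' : (l i : ZMod p) * a = (l i : ZMod p) * b := by
      simpa [zsmul_eq_mul] using hab
    exact mul_left_cancel₀ (hu i hi) h'
  -- f i0 + f i1 has card ≤ total sum card
  have hsplit : ∑ i, f i = (f i0 + f i1) + ∑ i ∈ (Finset.univ.erase i0).erase i1, f i := by
    rw [← Finset.add_sum_erase _ f (Finset.mem_univ i0),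
      ← Finset.add_sum_erase _ f (Finset.mem_erase.2 ⟨Ne.symm hne, Finset.mem_univ i1⟩),
      add_assoc]
  have hrest_ne : ∀ t : Finset (Fin k), (∑ i ∈ t, f i).Nonempty := by
    intro t
    induction t using Finset.induction_on with
    | empty => exact ⟨0, by simp⟩
    | insert _ _ h ih => rw [Finset.sum_insert h]; exact (hfne _).add ih
  have h01 : ((f i0 + f i1).card : ℝ) ≤ K * A.card := by
    refine le_trans ?_ hsum
    have : (f i0 + f i1).card ≤ (∑ i, f i).card := by
      rw [hsplit]; exact Finset.card_le_card_add_right (hrest_ne _)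
    exact_mod_cast this
  -- Ruzsa triangle
  have htri := Finset.ruzsa_triangle_inequality_add_add_add (f i0) (f i1) (f i0)
  -- card (f i0 + f i0) = card (A + A)
  have himg : f i0 + f i0 = (A + A).image fun a => l i0 • a := by
    rw [hf]
    ext x
    simp only [Finset.mem_add, Finset.mem_image]
    constructor
    · rintro ⟨y, ⟨a, ha, rfl⟩, z, ⟨b, hb, rfl⟩, rfl⟩
      exact ⟨a + b, ⟨a, ha, b, hb, rfl⟩, smul_add _ _ _⟩
    · rintro ⟨c, ⟨a, ha, b, hb, rfl⟩, rfl⟩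
      exact ⟨l i0 • a, ⟨a, ha, rfl⟩, l i0 • b, ⟨b, hb, rfl⟩, (smul_add _ _ _).symm⟩
  have hAA : (f i0 + f i0).card = (A + A).card := by
    rw [himg]
    apply Finset.card_image_of_injective
    intro a b hab
    have h' : (l i0 : ZMod p) * a = (l i0 : ZMod p) * b := by
      simpa [zsmul_eq_mul] using hab
    exact mul_left_cancel₀ (hu i0 h₁) h'
  have hc1 : (f i1).card = A.card := hcard i1 h₂
  have htri' : ((A + A).card : ℝ) * A.card ≤ (K * A.card) * (K * A.card) := by
    have h10 : ((f i1 + f i0).card : ℝ) ≤ K * A.card := by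
      rwa [add_comm]
    calc ((A + A).card : ℝ) * A.card = ((f i0 + f i0).card : ℝ) * (f i1).card := by
          rw [hAA, hc1]
      _ ≤ ((f i0 + f i1).card : ℝ) * ((f i1 + f i0).card : ℝ) := by exact_mod_cast htri
      _ ≤ (K * A.card) * (K * A.card) := by
          apply mul_le_mul h01 h10 (Nat.cast_nonneg _)
          positivity
  have hApos : (0 : ℝ) < A.card := by exact_mod_cast hA.card_pos
  rw [show K ^ 2 * (A.card : ℝ) = (K * A.card) * (K * A.card) / A.card by
    field_simp]
  rw [le_div_iff₀ hApos]
  exact htri'
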